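/- Let G = (U ∪ V, E) be a finite bipartite graph with positive edge weights w_e > 0. For a subgraph H of G, define the matching partition function Z(H) = Σ_{M matching of H} ∏_{e∈M} w_e (the empty matching contributing 1). Then for every u ∈ U and v ∈ V, Z(G) · Z(G−u−v) ≥ Z(G−u) · Z(G−v), where G−z denotes the graph obtained from G by deleting vertex z and all edges incident to it, and G−u−v denotes deleting both u and v. -/

import Mathlib

open Finset

def IsBipMatching {U V E : Type*} (eu : E → U) (ev : E → V) (S : Finset E) : Prop :=
  ∀ e ∈ S, ∀ f ∈ S, e ≠ f → eu e ≠ eu f ∧ ev e ≠ ev f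

instance {U V E : Type*} [DecidableEq U] [DecidableEq V] [DecidableEq E]
    (eu : E → U) (ev : E → V) (S : Finset E) : Decidable (IsBipMatching eu ev S) :=
  inferInstanceAs (Decidable (∀ e ∈ S, ∀ f ∈ S, e ≠ f → eu e ≠ eu f ∧ ev e ≠ ev f))

section Aux

variable {U V E : Type*} [DecidableEq U] [DecidableEq V] [DecidableEq E]

def Zf (eu : E → U) (ev : E → V) (w : E → ℝ) (A : Finset E) : ℝ :=
  ∑ S ∈ A.powerset.filter (fun S => IsBipMatching eu ev S), ∏ e ∈ S, w e

lemma isBipMatching_swap (eu : E → U) (ev : E → V) (S : Finset E) :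
    IsBipMatching eu ev S ↔ IsBipMatching ev eu S :=
  ⟨fun h e he f hf hef => (h e he f hf hef).symm,
   fun h e he f hf hef => (h e he f hf hef).symm⟩

lemma Zf_swap (eu : E → U) (ev : E → V) (w : E → ℝ) (A : Finset E) :
    Zf eu ev w A = Zf ev eu w A := by
  unfold Zf
  refine Finset.sum_congr ?_ fun _ _ => rfl
  exact Finset.filter_congr fun S _ => isBipMatching_swap eu ev S

lemma Zf_nonneg (eu : E → U) (ev : E → V) (w : E → ℝ) (hw : ∀ e, 0 < w e) (A : Finset E) :
    0 ≤ Zf eu ev w A :=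
  Finset.sum_nonneg fun S _ => Finset.prod_nonneg fun e _ => (hw e).le

lemma Zf_expand (eu : E → U) (ev : E → V) (w : E → ℝ) (A : Finset E) (u : U) :
    Zf eu ev w A = Zf eu ev w (A.filter (fun f => eu f ≠ u)) +
      ∑ e ∈ A.filter (fun f => eu f = u),
        w e * Zf eu ev w (A.filter (fun f => eu f ≠ u ∧ ev f ≠ ev e)) := by
  classical
  set M := A.powerset.filter (fun S => IsBipMatching eu ev S) with hM
  have hMsub : ∀ S ∈ M, S ⊆ A ∧ IsBipMatching eu ev S := by
    intro S hS
    have := Finset.mem_filter.1 hS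
    exact ⟨Finset.mem_powerset.1 this.1, this.2⟩
  have hsplit : Zf eu ev w A =
      (∑ S ∈ M.filter (fun S => ¬ ∃ f ∈ S, eu f = u), ∏ e ∈ S, w e) +
      ∑ S ∈ M.filter (fun S => ∃ f ∈ S, eu f = u), ∏ e ∈ S, w e := by
    rw [Zf, ← hM, add_comm]
    exact (Finset.sum_filter_add_sum_filter_not M _ _).symm
  have h1 : M.filter (fun S => ¬ ∃ f ∈ S, eu f = u) =
      (A.filter (fun f => eu f ≠ u)).powerset.filter (fun S => IsBipMatching eu ev S) := by
    ext S
    simp only [hM, Finset.mem_filter, Finset.mem_powerset, Finset.subset_iff, not_exists,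
      Finset.mem_filter, not_and]
    constructor
    · rintro ⟨⟨hSA, hm⟩, hu⟩
      exact ⟨fun f hf => ⟨hSA hf, hu f hf⟩, hm⟩
    · rintro ⟨hSA, hm⟩
      exact ⟨⟨fun f hf => (hSA hf).1, hm⟩, fun f hf => (hSA hf).2⟩
  have h2 : M.filter (fun S => ∃ f ∈ S, eu f = u) =
      (A.filter (fun f => eu f = u)).biUnion (fun e => M.filter (fun S => e ∈ S)) := by
    ext S
    simp only [Finset.mem_biUnion, Finset.mem_filter]
    constructor
    · rintro ⟨hS, f, hfS, hfu⟩
      exact ⟨f, ⟨(hMsub S hS).1 hfS, hfu⟩, hS, hfS⟩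
    · rintro ⟨e, ⟨_, heu⟩, hS, heS⟩
      exact ⟨hS, e, heS, heu⟩
  have hdisj : (↑(A.filter (fun f => eu f = u)) : Set E).PairwiseDisjoint
      (fun e => M.filter (fun S => e ∈ S)) := by
    intro e he f hf hef
    simp only [Finset.coe_filter, Set.mem_setOf_eq] at he hf
    refine Finset.disjoint_left.2 ?_
    intro S hSe hSf
    have hSe' := Finset.mem_filter.1 hSe
    have hSf' := Finset.mem_filter.1 hSf
    have hm := (hMsub S hSe'.1).2
    exact (hm e hSe'.2 f hSf'.2 hef).1 (he.2.trans hf.2.symm)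
  have key : ∀ e ∈ A.filter (fun f => eu f = u),
      (∑ S ∈ M.filter (fun S => e ∈ S), ∏ f ∈ S, w f)
        = w e * Zf eu ev w (A.filter (fun f => eu f ≠ u ∧ ev f ≠ ev e)) := by
    intro e he
    obtain ⟨heA, heu⟩ := Finset.mem_filter.1 he
    rw [Zf, Finset.mul_sum]
    refine Finset.sum_bij' (fun S _ => S.erase e) (fun S _ => insert e S) ?_ ?_ ?_ ?_ ?_
    · intro S hS
      have hS' := Finset.mem_filter.1 hS
      obtain ⟨hSA, hm⟩ := hMsub S hS'.1
      have heS := hS'.2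
      refine Finset.mem_filter.2 ⟨Finset.mem_powerset.2 ?_, ?_⟩
      · intro f hf
        obtain ⟨hfe, hfS⟩ := Finset.mem_erase.1 hf
        have := hm f hfS e heS hfe
        exact Finset.mem_filter.2 ⟨hSA hfS, heu ▸ this.1, this.2⟩
      · intro f hf g hg hfg
        exact hm f (Finset.mem_of_mem_erase hf) g (Finset.mem_of_mem_erase hg) hfg
    · intro S hS
      have hS' := Finset.mem_filter.1 hS
      have hSA := Finset.mem_powerset.1 hS'.1
      have hm := hS'.2
      have hprop : ∀ f ∈ S, f ∈ A ∧ eu f ≠ u ∧ ev f ≠ ev e := by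
        intro f hf
        have := Finset.mem_filter.1 (hSA hf)
        exact ⟨this.1, this.2⟩
      refine Finset.mem_filter.2 ⟨Finset.mem_filter.2 ⟨Finset.mem_powerset.2 ?_, ?_⟩,
        Finset.mem_insert_self e S⟩
      · intro f hf
        rcases Finset.mem_insert.1 hf with h | h
        · exact h ▸ heA
        · exact (hprop f h).1
      · intro f hf g hg hfg
        rcases Finset.mem_insert.1 hf with hf' | hf' <;>
          rcases Finset.mem_insert.1 hg with hg' | hg'
        · exact absurd (hf'.trans hg'.symm) hfg
        · subst hf'
          have := hprop g hg'
          exact ⟨fun h => this.2.1 (h ▸ heu), fun h => this.2.2 h.symm⟩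
        · subst hg'
          have := hprop f hf'
          exact ⟨fun h => this.2.1 (h.symm ▸ heu), this.2.2⟩
        · exact hm f hf' g hg' hfg
    · intro S hS
      exact Finset.insert_erase (Finset.mem_filter.1 hS).2
    · intro S hS
      have hS' := Finset.mem_filter.1 hS
      have hSA := Finset.mem_powerset.1 hS'.1
      refine Finset.erase_insert ?_
      intro heS
      exact (Finset.mem_filter.1 (hSA heS)).2.1 heu
    · intro S hS
      exact (Finset.mul_prod_erase S w (Finset.mem_filter.1 hS).2).symm
  rw [hsplit, h1, h2, Finset.sum_biUnion hdisj]
  rw [Zf]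
  congr 1
  exact Finset.sum_congr rfl key

lemma Zf_expand_v (eu : E → U) (ev : E → V) (w : E → ℝ) (A : Finset E) (v : V) :
    Zf eu ev w A = Zf eu ev w (A.filter (fun f => ev f ≠ v)) +
      ∑ e ∈ A.filter (fun f => ev f = v),
        w e * Zf eu ev w (A.filter (fun f => ev f ≠ v ∧ eu f ≠ eu e)) := by
  rw [Zf_swap eu ev w A, Zf_expand ev eu w A v]
  simp only [Zf_swap ev eu w]

lemma Zf_main (eu : E → U) (ev : E → V) (w : E → ℝ) (hw : ∀ e, 0 < w e) (A : Finset E) :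
    (∀ (u : U) (v : V),
      Zf eu ev w (A.filter fun e => eu e ≠ u) * Zf eu ev w (A.filter fun e => ev e ≠ v) ≤
        Zf eu ev w A * Zf eu ev w (A.filter fun e => eu e ≠ u ∧ ev e ≠ v)) ∧
    (∀ a b : V, a ≠ b →
      Zf eu ev w A * Zf eu ev w (A.filter fun e => ev e ≠ a ∧ ev e ≠ b) ≤
        Zf eu ev w (A.filter fun e => ev e ≠ a) * Zf eu ev w (A.filter fun e => ev e ≠ b)) := by
  induction A using Finset.strongInduction with
  | _ A ih =>
  constructor
  · intro u v
    have hAv1 : (A.filter fun e => ev e ≠ v).filter (fun f => eu f ≠ u)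
        = A.filter fun e => eu e ≠ u ∧ ev e ≠ v := by
      ext f; simp only [Finset.mem_filter]; tauto
    rw [Zf_expand eu ev w A u, Zf_expand eu ev w (A.filter fun e => ev e ≠ v) u, hAv1,
      mul_add, add_mul]
    refine add_le_add_right ?_ _
    rw [Finset.mul_sum, Finset.sum_mul]
    have hsub : (A.filter fun e => ev e ≠ v).filter (fun f => eu f = u) ⊆
        A.filter (fun f => eu f = u) :=
      Finset.filter_subset_filter _ (Finset.filter_subset _ _)
    calc ∑ e ∈ (A.filter fun e => ev e ≠ v).filter (fun f => eu f = u),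
          Zf eu ev w (A.filter fun e => eu e ≠ u) *
            (w e * Zf eu ev w ((A.filter fun e => ev e ≠ v).filter
              (fun f => eu f ≠ u ∧ ev f ≠ ev e)))
        ≤ ∑ e ∈ (A.filter fun e => ev e ≠ v).filter (fun f => eu f = u),
            w e * Zf eu ev w (A.filter fun f => eu f ≠ u ∧ ev f ≠ ev e) *
              Zf eu ev w (A.filter fun e => eu e ≠ u ∧ ev e ≠ v) := by
          refine Finset.sum_le_sum ?_
          intro e he
          have he1 := Finset.mem_filter.1 he
          have he2 := Finset.mem_filter.1 he1.1
          have heA : e ∈ A := he2.1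
          have hev : ev e ≠ v := he2.2
          have heu : eu e = u := he1.2
          have hB : (A.filter fun e => eu e ≠ u) ⊂ A := by
            refine Finset.ssubset_iff_of_subset (Finset.filter_subset _ _) |>.2 ?_
            exact ⟨e, heA, by simp [heu]⟩
          have hQ := (ih _ hB).2 (ev e) v hev
          have e1 : (A.filter fun e => ev e ≠ v).filter (fun f => eu f ≠ u ∧ ev f ≠ ev e)
              = (A.filter fun e => eu e ≠ u).filter (fun f => ev f ≠ ev e ∧ ev f ≠ v) := by
            ext f; simp only [Finset.mem_filter]; tauto
          have e2 : (A.filter fun e => eu e ≠ u).filter (fun f => ev f ≠ v)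
              = A.filter fun e => eu e ≠ u ∧ ev e ≠ v := by
            ext f; simp only [Finset.mem_filter]; tauto
          have e3 : A.filter (fun f => eu f ≠ u ∧ ev f ≠ ev e)
              = (A.filter fun e => eu e ≠ u).filter (fun f => ev f ≠ ev e) := by
            ext f; simp only [Finset.mem_filter]; tauto
          rw [e1, e3]
          rw [e2] at hQ
          calc Zf eu ev w (A.filter fun e => eu e ≠ u) *
                (w e * Zf eu ev w ((A.filter fun e => eu e ≠ u).filter
                  (fun f => ev f ≠ ev e ∧ ev f ≠ v)))
              = w e * (Zf eu ev w (A.filter fun e => eu e ≠ u) *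
                  Zf eu ev w ((A.filter fun e => eu e ≠ u).filter
                    (fun f => ev f ≠ ev e ∧ ev f ≠ v))) := by ring
            _ ≤ w e * (Zf eu ev w ((A.filter fun e => eu e ≠ u).filter (fun f => ev f ≠ ev e)) *
                  Zf eu ev w (A.filter fun e => eu e ≠ u ∧ ev e ≠ v)) :=
                mul_le_mul_of_nonneg_left hQ (hw e).le
            _ = w e * Zf eu ev w ((A.filter fun e => eu e ≠ u).filter (fun f => ev f ≠ ev e)) *
                  Zf eu ev w (A.filter fun e => eu e ≠ u ∧ ev e ≠ v) := by ring
      _ ≤ ∑ e ∈ A.filter (fun f => eu f = u),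
            w e * Zf eu ev w (A.filter fun f => eu f ≠ u ∧ ev f ≠ ev e) *
              Zf eu ev w (A.filter fun e => eu e ≠ u ∧ ev e ≠ v) := by
          refine Finset.sum_le_sum_of_subset_of_nonneg hsub ?_
          intro e _ _
          have h1 := Zf_nonneg eu ev w hw (A.filter fun f => eu f ≠ u ∧ ev f ≠ ev e)
          have h2 := Zf_nonneg eu ev w hw (A.filter fun e => eu e ≠ u ∧ ev e ≠ v)
          exact mul_nonneg (mul_nonneg (hw e).le h1) h2
  · intro a b hab
    have q2 : (A.filter fun e => ev e ≠ b).filter (fun f => ev f = a)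
        = A.filter (fun f => ev f = a) := by
      ext f
      simp only [Finset.mem_filter]
      constructor
      · tauto
      · rintro ⟨hfA, hfa⟩
        exact ⟨⟨hfA, fun h => hab (hfa ▸ h)⟩, hfa⟩
    have q1 : (A.filter fun e => ev e ≠ b).filter (fun f => ev f ≠ a)
        = A.filter fun e => ev e ≠ a ∧ ev e ≠ b := by
      ext f; simp only [Finset.mem_filter]; tauto
    rw [Zf_expand_v eu ev w A a, Zf_expand_v eu ev w (A.filter fun e => ev e ≠ b) a, q1, q2,
      add_mul, mul_add]
    refine add_le_add_right ?_ _
    rw [Finset.sum_mul, Finset.mul_sum]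
    refine Finset.sum_le_sum ?_
    intro e he
    have he1 := Finset.mem_filter.1 he
    have heA : e ∈ A := he1.1
    have hea : ev e = a := he1.2
    have hAa : (A.filter fun e => ev e ≠ a) ⊂ A := by
      refine Finset.ssubset_iff_of_subset (Finset.filter_subset _ _) |>.2 ?_
      exact ⟨e, heA, by simp [hea]⟩
    have hP := (ih _ hAa).1 (eu e) b
    have r1 : (A.filter fun e => ev e ≠ a).filter (fun f => eu f ≠ eu e)
        = A.filter (fun f => ev f ≠ a ∧ eu f ≠ eu e) := by
      ext f; simp only [Finset.mem_filter]; tauto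
    have r2 : (A.filter fun e => ev e ≠ a).filter (fun f => ev f ≠ b)
        = A.filter fun e => ev e ≠ a ∧ ev e ≠ b := by
      ext f; simp only [Finset.mem_filter]; tauto
    have r3 : (A.filter fun e => ev e ≠ a).filter (fun f => eu f ≠ eu e ∧ ev f ≠ b)
        = (A.filter fun e => ev e ≠ b).filter (fun f => ev f ≠ a ∧ eu f ≠ eu e) := by
      ext f; simp only [Finset.mem_filter]; tauto
    rw [r1, r2, r3] at hP
    calc w e * Zf eu ev w (A.filter fun f => ev f ≠ a ∧ eu f ≠ eu e) *
          Zf eu ev w (A.filter fun e => ev e ≠ a ∧ ev e ≠ b)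
        = w e * (Zf eu ev w (A.filter fun f => ev f ≠ a ∧ eu f ≠ eu e) *
            Zf eu ev w (A.filter fun e => ev e ≠ a ∧ ev e ≠ b)) := by ring
      _ ≤ w e * (Zf eu ev w (A.filter fun e => ev e ≠ a) *
            Zf eu ev w ((A.filter fun e => ev e ≠ b).filter
              (fun f => ev f ≠ a ∧ eu f ≠ eu e))) :=
          mul_le_mul_of_nonneg_left hP (hw e).le
      _ = Zf eu ev w (A.filter fun e => ev e ≠ a) *
            (w e * Zf eu ev w ((A.filter fun e => ev e ≠ b).filter
              (fun f => ev f ≠ a ∧ eu f ≠ eu e))) := by ring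

end Aux

theorem stmt_4
    {U V E : Type*} [Fintype U] [Fintype V] [Fintype E]
    [DecidableEq U] [DecidableEq V] [DecidableEq E]
    -- a finite simple bipartite graph
    (eu : E → U) (ev : E → V)
    (hsimple : Function.Injective (fun e => (eu e, ev e)))
    (w : E → ℝ) (hw : ∀ e, 0 < w e)
    (u : U) (v : V)
    -- Z A = matching partition function of the subgraph with edge set A
    (Z : Finset E → ℝ)
    (hZ : ∀ A : Finset E,
      Z A = ∑ S ∈ A.powerset.filter (fun S => IsBipMatching eu ev S), ∏ e ∈ S, w e) :
    -- Z(G−u) · Z(G−v) ≤ Z(G) · Z(G−u−v)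
    Z (univ.filter (fun e => eu e ≠ u)) * Z (univ.filter (fun e => ev e ≠ v)) ≤
      Z univ * Z (univ.filter (fun e => eu e ≠ u ∧ ev e ≠ v)) := by
  have h := (Zf_main eu ev w hw univ).1 u v
  simp only [Zf] at h
  simp only [hZ]
  exact h
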